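/- Let k ≥ 2 and n ≥ 1. Let S be a subset of Σ_k^n and let g : S → S be a bijection such that every pair (x, g(x)) is an edge of the de Bruijn graph G_n^k (i.e., the length-(n−1) suffix of x equals the length-(n−1) prefix of g(x)); in particular this covers the case where g is a single cycle of G_n^k. Then there exists a permutation π of all of Σ_k^n extending g such that every pair (x, π(x)) is an edge of G_n^k. Equivalently, every cycle of G_n^k can be completed to a 2-factor of G_n^k. -/

import Mathlib

lemma exists_perm_extend {α : Type*} [Fintype α] (s : Set α) (f : α → α)
    (hf : Set.InjOn f s) : ∃ h : Equiv.Perm α, ∀ a ∈ s, h a = f a := by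
  classical
  let e_s : s ≃ (f '' s) := Equiv.Set.imageOfInjOn f s hf
  have hcard : Fintype.card (↥(sᶜ)) = Fintype.card (↥((f '' s)ᶜ)) := by
    rw [Fintype.card_compl_set, Fintype.card_compl_set, Fintype.card_congr e_s]
  let e_c := Fintype.equivOfCardEq hcard
  refine ⟨(Equiv.Set.sumCompl s).symm.trans ((Equiv.sumCongr e_s e_c).trans
    (Equiv.Set.sumCompl (f '' s))), ?_⟩
  intro a ha
  have h1 : (Equiv.Set.sumCompl s).symm a = Sum.inl ⟨a, ha⟩ :=
    Equiv.Set.sumCompl_symm_apply (s := s) (x := ⟨a, ha⟩)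
  simp [h1, e_s, Equiv.Set.imageOfInjOn]

def headTailEquiv (k n : ℕ) (hn : 1 ≤ n) :
    {w : List (Fin k) // w.length = n} ≃ Fin k × {w : List (Fin k) // w.length = n - 1} where
  toFun x := (x.1.head (by intro h; have := x.2; rw [h] at this; simp at this; omega),
    ⟨x.1.tail, by simp [x.2]⟩)
  invFun p := ⟨p.1 :: p.2.1, by simp [p.2.2]; omega⟩
  left_inv x := by
    apply Subtype.ext
    exact List.cons_head_tail _
  right_inv p := by
    simp

def lastEquiv (k n : ℕ) (hn : 1 ≤ n) :
    {w : List (Fin k) // w.length = n} ≃ {w : List (Fin k) // w.length = n - 1} × Fin k where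
  toFun x := (⟨x.1.dropLast, by simp [x.2]⟩,
    x.1.getLast (by intro h; have := x.2; rw [h] at this; simp at this; omega))
  invFun p := ⟨p.1.1 ++ [p.2], by simp [p.1.2]; omega⟩
  left_inv x := by
    apply Subtype.ext
    exact List.dropLast_append_getLast _
  right_inv p := by
    ext
    · simp
    · simp [List.getLast_append]

/-- `deBruijnEdge n x y` holds iff `(x, y)` is an edge of the `k`-ary de Bruijn
graph of order `n`: `x = a :: t` and `y = t ++ [b]` for letters `a, b` and a
word `t` of length `n - 1`. -/
def deBruijnEdge {k : ℕ} (n : ℕ) (x y : List (Fin k)) : Prop :=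
  ∃ (a b : Fin k) (t : List (Fin k)), t.length = n - 1 ∧ x = a :: t ∧ y = t ++ [b]

theorem stmt_3 (k n : ℕ) (hk : 2 ≤ k) (hn : 1 ≤ n)
    (S : Set {w : List (Fin k) // w.length = n})
    (g : {w : List (Fin k) // w.length = n} → {w : List (Fin k) // w.length = n})
    (hbij : Set.BijOn g S S)
    (hedge : ∀ x ∈ S, deBruijnEdge n x.val (g x).val) :
    ∃ π : Equiv.Perm {w : List (Fin k) // w.length = n},
      (∀ x ∈ S, π x = g x) ∧ ∀ x, deBruijnEdge n x.val (π x).val := by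
  classical
  let e1 := headTailEquiv k n hn
  let e2 := lastEquiv k n hn
  -- key structural fact: for x ∈ S, g x = (tail x) ++ [last letter]
  have key : ∀ x ∈ S, (g x).val = x.val.tail ++ [(e2 (g x)).2] := by
    intro x hx
    obtain ⟨a, b, t, hlen, hx1, hx2⟩ := hedge x hx
    have htail : x.val.tail = t := by rw [hx1]; rfl
    have : (e2 (g x)).2 = b := by
      simp only [e2, lastEquiv]
      simp [hx2, List.getLast_append]
    rw [this, htail, hx2]
  -- for each middle word t, the partial injection on last letters
  let s : {w : List (Fin k) // w.length = n - 1} → Set (Fin k) := fun t => {a | (e1.symm (a, t)) ∈ S}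
  let f : {w : List (Fin k) // w.length = n - 1} → Fin k → Fin k := fun t a => (e2 (g (e1.symm (a, t)))).2
  have hinj : ∀ t, Set.InjOn (f t) (s t) := by
    intro t a ha a' ha' heq
    have h1 := key _ ha
    have h2 := key _ ha'
    have htails : (e1.symm (a, t)).val.tail = (e1.symm (a', t)).val.tail := by
      simp [e1, headTailEquiv]
    have : (g (e1.symm (a, t))).val = (g (e1.symm (a', t))).val := by
      simp only [f] at heq
      rw [h1, h2, htails, heq]
    have hg : g (e1.symm (a, t)) = g (e1.symm (a', t)) := Subtype.ext this
    have := hbij.injOn ha ha' hg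
    have : (a, t) = (a', t) := e1.symm.injective this
    exact (Prod.mk.injEq .. ▸ this).1
  choose h hh using fun t => exists_perm_extend (s t) (f t) (hinj t)
  -- assemble the permutation
  let σ : Fin k × {w : List (Fin k) // w.length = n - 1} ≃ {w : List (Fin k) // w.length = n - 1} × Fin k :=
    { toFun := fun p => (p.2, h p.2 p.1)
      invFun := fun p => ((h p.1).symm p.2, p.1)
      left_inv := fun p => by simp
      right_inv := fun p => by simp }
  refine ⟨e1.trans (σ.trans e2.symm), ?_, ?_⟩
  · intro x hx
    have hx1 : e1.symm ((e1 x).1, (e1 x).2) = x := by simp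
    have hmem : (e1 x).1 ∈ s (e1 x).2 := by
      simp only [s, Set.mem_setOf_eq, hx1]; exact hx
    have hf : h (e1 x).2 (e1 x).1 = f (e1 x).2 (e1 x).1 := hh _ _ hmem
    apply Subtype.ext
    have hgx := key x hx
    simp only [Equiv.trans_apply, σ, Equiv.coe_fn_mk]
    rw [hf]
    have : (e2.symm ((e1 x).2, f (e1 x).2 (e1 x).1)).val
        = ((e1 x).2).val ++ [f (e1 x).2 (e1 x).1] := by
      simp [e2, lastEquiv]
    rw [this, hgx]
    have ht : ((e1 x).2).val = x.val.tail := rfl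
    have hfv : f (e1 x).2 (e1 x).1 = (e2 (g x)).2 := by
      simp only [f]; rw [hx1]
    rw [ht, hfv]
  · intro x
    refine ⟨(e1 x).1, h (e1 x).2 (e1 x).1, ((e1 x).2).val, ((e1 x).2).2, ?_, ?_⟩
    · conv_lhs => rw [← e1.symm_apply_apply x]
      simp [e1, headTailEquiv]
    · simp only [Equiv.trans_apply, σ, Equiv.coe_fn_mk]
      simp [e2, lastEquiv]
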